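/- Let q < p be primes. Then N_=(qp) ≥ p² + 2q²p − 4qp + 2 + (p−1)·min{q−1, p−q}, i.e. there exists a graph on p² + 2q²p − 4qp + 1 + (p−1)·min{q−1, p−q} vertices with no induced regular subgraph of order exactly qp. -/

import Mathlib

/-- The induced subgraph of `G` on `s` is regular: all vertices of `s` have the same
number of neighbours within `s`. -/
def RegOn {V : Type*} (G : SimpleGraph V) (s : Set V) : Prop :=
  ∃ d : ℕ, ∀ v ∈ s, (s ∩ {w | G.Adj v w}).ncard = d

/-- `G` has a regular induced subgraph of order exactly `k`. -/
def HasRegEq {V : Type*} (G : SimpleGraph V) (k : ℕ) : Prop :=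
  ∃ s : Set V, s.ncard = k ∧ RegOn G s

/-- `G` has a regular induced subgraph of order at least `k`. -/
def HasRegGe {V : Type*} (G : SimpleGraph V) (k : ℕ) : Prop :=
  ∃ s : Set V, k ≤ s.ncard ∧ RegOn G s

/-- The least `n` such that every graph on `n` vertices has a regular induced subgraph
of order exactly `k`. -/
noncomputable def Neq (k : ℕ) : ℕ :=
  sInf {n | ∀ G : SimpleGraph (Fin n), HasRegEq G k}

/-- The least `n` such that every graph on `n` vertices has a regular induced subgraph
of order at least `k`. -/
noncomputable def Nge (k : ℕ) : ℕ :=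
  sInf {n | ∀ G : SimpleGraph (Fin n), HasRegGe G k}

inductive MyPart : Type | C | D | X | A
deriving DecidableEq

instance : Fintype MyPart := ⟨{.C, .D, .X, .A}, fun x => by cases x <;> decide⟩

open MyPart in
def prel : MyPart → MyPart → Bool
  | C, C => true | D, D => true | X, X => true | A, A => true
  | C, D => true | D, C => true
  | C, X => true | X, C => true
  | X, A => true | A, X => true
  | _, _ => false

lemma prel_symm (a b : MyPart) : prel a b = prel b a := by cases a <;> cases b <;> rfl

lemma partSum {M : Type*} [AddCommMonoid M] (f : MyPart → M) :
    ∑ P : MyPart, f P = f .C + f .D + f .X + f .A := by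
  have : (Finset.univ : Finset MyPart) = {.C, .D, .X, .A} := by decide
  rw [this]
  simp [Finset.sum_insert, add_assoc]

abbrev Idx (q p : ℕ) : Type := Fin (q-1) ⊕ Fin (p - q - min (q-1) (p-q)) ⊕ Fin (q*p - p)

def sz (q p : ℕ) (i : Idx q p) (P : MyPart) : ℕ :=
  match i, P with
  | .inl _, .C => q*p - p
  | .inl _, .D => p-1
  | .inl i, .X => if (i:ℕ) < min (q-1) (p-q) then p-1 else 0
  | .inl i, .A => if (i:ℕ) < min (q-1) (p-q) then p-1 else 0
  | .inr (.inl _), .D => p-1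
  | .inr (.inr _), .D => q-1
  | _, _ => 0

abbrev Vtx (q p : ℕ) : Type := Σ i : Idx q p, Σ P : MyPart, Fin (sz q p i P)

def Gr (q p : ℕ) : SimpleGraph (Vtx q p) where
  Adj u v := u.1 = v.1 ∧ prel u.2.1 v.2.1 ∧ u ≠ v
  symm := ⟨by
    rintro u v ⟨h1, h2, h3⟩
    exact ⟨h1.symm, by rw [prel_symm]; exact h2, h3.symm⟩⟩
  loopless := ⟨fun u h => h.2.2 rfl⟩

def fiber (q p : ℕ) (i : Idx q p) (P : MyPart) : Set (Vtx q p) := {v | v.1 = i ∧ v.2.1 = P}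

lemma ncard_fiber (q p : ℕ) (i : Idx q p) (P : MyPart) :
    (fiber q p i P).ncard = sz q p i P := by
  have key : ∀ v : (fiber q p i P), sz q p v.1.1 v.1.2.1 = sz q p i P := by
    rintro ⟨⟨i', P', z⟩, rfl, rfl⟩; rfl
  have e : (fiber q p i P) ≃ Fin (sz q p i P) :=
    { toFun := fun v => Fin.cast (key v) v.1.2.2
      invFun := fun x => ⟨⟨i, P, x⟩, rfl, rfl⟩
      left_inv := by rintro ⟨⟨i', P', z⟩, rfl, rfl⟩; rfl
      right_inv := fun x => rfl }
  rw [← Nat.card_coe_set_eq, Nat.card_eq_of_equiv_fin e]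

section Deg
variable (q p : ℕ) (s : Set (Vtx q p)) (d : ℕ) (i : Idx q p)

lemma fiber_disj (P Q : MyPart) (h : P ≠ Q) :
    Disjoint (s ∩ fiber q p i P) (s ∩ fiber q p i Q) := by
  rw [Set.disjoint_left]
  rintro w ⟨_, _, h2⟩ ⟨_, _, h4⟩
  exact h (h2.symm.trans h4)

variable (hreg : ∀ v ∈ s, (s ∩ {w | (Gr q p).Adj v w}).ncard = d)
include hreg

lemma deg_C (h : 0 < (s ∩ fiber q p i .C).ncard) :
    (s ∩ fiber q p i .C).ncard + (s ∩ fiber q p i .D).ncard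
      + (s ∩ fiber q p i .X).ncard = d + 1 := by
  obtain ⟨v, hvs, hv1, hv2⟩ := Set.nonempty_of_ncard_ne_zero h.ne'
  have key : s ∩ {w | (Gr q p).Adj v w} =
      ((s ∩ fiber q p i .C) ∪ (s ∩ fiber q p i .D) ∪ (s ∩ fiber q p i .X)) \ {v} := by
    ext w
    constructor
    · rintro ⟨hws, h1, h2, h3⟩
      rw [hv2] at h2
      have hw1 : w.1 = i := h1 ▸ hv1
      refine ⟨?_, fun he => h3 (Set.mem_singleton_iff.mp he).symm⟩
      cases hP : w.2.1 <;> rw [hP] at h2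
      · exact Or.inl (Or.inl ⟨hws, hw1, hP⟩)
      · exact Or.inl (Or.inr ⟨hws, hw1, hP⟩)
      · exact Or.inr ⟨hws, hw1, hP⟩
      · simp [prel] at h2
    · rintro ⟨(⟨hws, hw1, hw2⟩ | ⟨hws, hw1, hw2⟩) | ⟨hws, hw1, hw2⟩, hne⟩ <;>
        exact ⟨hws, hv1.trans hw1.symm, by rw [hv2, hw2]; rfl, Ne.symm hne⟩
  have hd := hreg v hvs
  rw [key, Set.ncard_diff_singleton_of_mem
        (Set.mem_union_left _ (Set.mem_union_left _ (show v ∈ s ∩ fiber q p i MyPart.C from ⟨hvs, hv1, hv2⟩))),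
      Set.ncard_union_eq (Disjoint.union_left
        (fiber_disj q p s i .C .X (by simp)) (fiber_disj q p s i .D .X (by simp))),
      Set.ncard_union_eq (fiber_disj q p s i .C .D (by simp))] at hd
  omega

lemma deg_D (h : 0 < (s ∩ fiber q p i .D).ncard) :
    (s ∩ fiber q p i .C).ncard + (s ∩ fiber q p i .D).ncard = d + 1 := by
  obtain ⟨v, hvs, hv1, hv2⟩ := Set.nonempty_of_ncard_ne_zero h.ne'
  have key : s ∩ {w | (Gr q p).Adj v w} =
      ((s ∩ fiber q p i .C) ∪ (s ∩ fiber q p i .D)) \ {v} := by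
    ext w
    constructor
    · rintro ⟨hws, h1, h2, h3⟩
      rw [hv2] at h2
      have hw1 : w.1 = i := h1 ▸ hv1
      refine ⟨?_, fun he => h3 (Set.mem_singleton_iff.mp he).symm⟩
      cases hP : w.2.1 <;> rw [hP] at h2
      · exact Or.inl ⟨hws, hw1, hP⟩
      · exact Or.inr ⟨hws, hw1, hP⟩
      · simp [prel] at h2
      · simp [prel] at h2
    · rintro ⟨⟨hws, hw1, hw2⟩ | ⟨hws, hw1, hw2⟩, hne⟩ <;>
        exact ⟨hws, hv1.trans hw1.symm, by rw [hv2, hw2]; rfl, Ne.symm hne⟩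
  have hd := hreg v hvs
  rw [key, Set.ncard_diff_singleton_of_mem (Set.mem_union_right _ (show v ∈ s ∩ fiber q p i MyPart.D from ⟨hvs, hv1, hv2⟩)),
      Set.ncard_union_eq (fiber_disj q p s i .C .D (by simp))] at hd
  omega

lemma deg_X (h : 0 < (s ∩ fiber q p i .X).ncard) :
    (s ∩ fiber q p i .C).ncard + (s ∩ fiber q p i .X).ncard
      + (s ∩ fiber q p i .A).ncard = d + 1 := by
  obtain ⟨v, hvs, hv1, hv2⟩ := Set.nonempty_of_ncard_ne_zero h.ne'
  have key : s ∩ {w | (Gr q p).Adj v w} =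
      ((s ∩ fiber q p i .C) ∪ (s ∩ fiber q p i .X) ∪ (s ∩ fiber q p i .A)) \ {v} := by
    ext w
    constructor
    · rintro ⟨hws, h1, h2, h3⟩
      rw [hv2] at h2
      have hw1 : w.1 = i := h1 ▸ hv1
      refine ⟨?_, fun he => h3 (Set.mem_singleton_iff.mp he).symm⟩
      cases hP : w.2.1 <;> rw [hP] at h2
      · exact Or.inl (Or.inl ⟨hws, hw1, hP⟩)
      · simp [prel] at h2
      · exact Or.inl (Or.inr ⟨hws, hw1, hP⟩)
      · exact Or.inr ⟨hws, hw1, hP⟩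
    · rintro ⟨(⟨hws, hw1, hw2⟩ | ⟨hws, hw1, hw2⟩) | ⟨hws, hw1, hw2⟩, hne⟩ <;>
        exact ⟨hws, hv1.trans hw1.symm, by rw [hv2, hw2]; rfl, Ne.symm hne⟩
  have hd := hreg v hvs
  rw [key, Set.ncard_diff_singleton_of_mem
        (Set.mem_union_left _ (Set.mem_union_right _ (show v ∈ s ∩ fiber q p i MyPart.X from ⟨hvs, hv1, hv2⟩))),
      Set.ncard_union_eq (Disjoint.union_left
        (fiber_disj q p s i .C .A (by simp)) (fiber_disj q p s i .X .A (by simp))),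
      Set.ncard_union_eq (fiber_disj q p s i .C .X (by simp))] at hd
  omega

lemma deg_A (h : 0 < (s ∩ fiber q p i .A).ncard) :
    (s ∩ fiber q p i .X).ncard + (s ∩ fiber q p i .A).ncard = d + 1 := by
  obtain ⟨v, hvs, hv1, hv2⟩ := Set.nonempty_of_ncard_ne_zero h.ne'
  have key : s ∩ {w | (Gr q p).Adj v w} =
      ((s ∩ fiber q p i .X) ∪ (s ∩ fiber q p i .A)) \ {v} := by
    ext w
    constructor
    · rintro ⟨hws, h1, h2, h3⟩
      rw [hv2] at h2
      have hw1 : w.1 = i := h1 ▸ hv1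
      refine ⟨?_, fun he => h3 (Set.mem_singleton_iff.mp he).symm⟩
      cases hP : w.2.1 <;> rw [hP] at h2
      · simp [prel] at h2
      · simp [prel] at h2
      · exact Or.inl ⟨hws, hw1, hP⟩
      · exact Or.inr ⟨hws, hw1, hP⟩
    · rintro ⟨⟨hws, hw1, hw2⟩ | ⟨hws, hw1, hw2⟩, hne⟩ <;>
        exact ⟨hws, hv1.trans hw1.symm, by rw [hv2, hw2]; rfl, Ne.symm hne⟩
  have hd := hreg v hvs
  rw [key, Set.ncard_diff_singleton_of_mem (Set.mem_union_right _ (show v ∈ s ∩ fiber q p i MyPart.A from ⟨hvs, hv1, hv2⟩)),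
      Set.ncard_union_eq (fiber_disj q p s i .X .A (by simp))] at hd
  omega

end Deg

/-- cap: max number of cliques of size `s'` from a component with part sizes c,dd,x,a -/
def cap (c dd x a s' : ℕ) : ℕ :=
  (if s' ≤ c+dd ∨ s' ≤ c+x ∨ (0 < x ∧ s' ≤ x+a) then 1 else 0)
  + (if s' ≤ a ∨ (0 < x ∧ s' ≤ dd) then 1 else 0)

lemma localClass (d nC nD nX nA c dd x a : ℕ)
    (hbC : nC ≤ c) (hbD : nD ≤ dd) (hbX : nX ≤ x) (hbA : nA ≤ a)
    (hC : 0 < nC → nC + nD + nX = d+1)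
    (hD : 0 < nD → nC + nD = d+1)
    (hX : 0 < nX → nC + nX + nA = d+1)
    (hA : 0 < nA → nX + nA = d+1) :
    ∃ k, nC+nD+nX+nA = k*(d+1) ∧ k ≤ cap c dd x a (d+1) := by
  unfold cap
  obtain hX0 | hXpos := Nat.eq_zero_or_pos nX
  · subst hX0
    have e1 : nC + nD = 0 ∨ nC + nD = d+1 := by
      rcases Nat.eq_zero_or_pos nC with h|h
      · rcases Nat.eq_zero_or_pos nD with h'|h'
        · left; omega
        · have := hD h'; omega
      · have := hC h; omega
    have e2 : nA = 0 ∨ nA = d+1 := by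
      rcases Nat.eq_zero_or_pos nA with h|h
      · left; exact h
      · have := hA h; omega
    refine ⟨(if 0 < nC+nD then 1 else 0) + (if 0 < nA then 1 else 0), ?_, ?_⟩ <;>
      split_ifs <;> omega
  · obtain hC0 | hCpos := Nat.eq_zero_or_pos nC
    · have h2 := hX hXpos
      have e1 : nD = 0 ∨ nD = d+1 := by
        rcases Nat.eq_zero_or_pos nD with h|h
        · left; exact h
        · have := hD h; omega
      refine ⟨1 + (if 0 < nD then 1 else 0), ?_, ?_⟩ <;> split_ifs <;> omega
    · have h1 := hC hCpos
      have h2 := hX hXpos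
      have hD0 : nD = 0 := by
        rcases Nat.eq_zero_or_pos nD with h|h
        · exact h
        · have := hD h; omega
      have hA0 : nA = 0 := by omega
      refine ⟨1, by omega, ?_⟩
      split_ifs <;> omega

lemma sum_if_fin (n t A B : ℕ) (h : t ≤ n) :
    ∑ i : Fin n, (if (i:ℕ) < t then A else B) = t*A + (n-t)*B := by
  rw [Fin.sum_univ_eq_sum_range (fun i => if i < t then A else B) n, Finset.sum_ite]
  have h1 : (Finset.range n).filter (fun i => i < t) = Finset.range t := by
    ext x; simp; omega
  have h2 : (Finset.range n).filter (fun i => ¬ i < t) = Finset.Ico t n := by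
    ext x; simp; omega
  rw [h1, h2]
  simp [Finset.sum_const, Nat.card_Ico, mul_comm]

lemma dvd_mul_primes {q p n : ℕ} (hq : q.Prime) (hp : p.Prime) (hne : q ≠ p) (h : n ∣ q*p) :
    n = 1 ∨ n = q ∨ n = p ∨ n = q*p := by
  by_cases hqd : q ∣ n
  · obtain ⟨e, rfl⟩ := hqd
    have he : e ∣ p := by
      have := (Nat.mul_dvd_mul_iff_left hq.pos).mp h
      exact this
    rcases (hp.eq_one_or_self_of_dvd e he) with rfl | rfl
    · right; left; simp
    · right; right; right; rfl
  · have hcop : Nat.Coprime q n := (Nat.Prime.coprime_iff_not_dvd hq).mpr hqd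
    have : n ∣ p := (Nat.Coprime.dvd_of_dvd_mul_left (Nat.Coprime.symm hcop) h)
    rcases hp.eq_one_or_self_of_dvd n this with rfl | rfl
    · left; rfl
    · right; right; left; rfl

lemma ncard_eq_sum_fibers {V ι : Type*} [Fintype V] [Fintype ι] [DecidableEq ι]
    (s : Set V) (f : V → ι) :
    s.ncard = ∑ i, (s ∩ f ⁻¹' {i}).ncard := by
  classical
  rw [Set.ncard_eq_toFinset_card s s.toFinite,
    Finset.card_eq_sum_card_fiberwise (f := f) (t := Finset.univ) (fun x _ => Finset.mem_univ _)]
  refine Finset.sum_congr rfl fun i _ => ?_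
  rw [Set.ncard_eq_toFinset_card _ (s ∩ f ⁻¹' {i}).toFinite]
  congr 1
  ext v
  simp only [Set.Finite.mem_toFinset, Finset.mem_filter]
  constructor
  · rintro ⟨h1, h2⟩; exact ⟨h1, h2⟩
  · rintro ⟨h1, h2⟩; exact ⟨h1, h2⟩

lemma noRegGr (q p : ℕ) (hq : q.Prime) (hp : p.Prime) (hqp : q < p) :
    ¬ HasRegEq (Gr q p) (q*p) := by
  have hq2 : 2 ≤ q := hq.two_le
  have hp3 : 3 ≤ p := by have := hp.two_le; omega
  have hM1 : 2*p ≤ q*p := Nat.mul_le_mul_right p hq2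
  have hM2 : 2*q ≤ q*p := by calc 2*q ≤ q*2 := by omega
                                _ ≤ q*p := Nat.mul_le_mul_left q (by omega)
  rintro ⟨s, hcard, d, hreg⟩
  set t := min (q-1) (p-q) with ht
  have ht1 : t ≤ q-1 := min_le_left _ _
  have ht2 : t ≤ p-q := min_le_right _ _
  have hloc : ∀ i : Idx q p, ∃ k,
      (∑ P : MyPart, (s ∩ fiber q p i P).ncard) = k*(d+1) ∧
      k ≤ cap (sz q p i .C) (sz q p i .D) (sz q p i .X) (sz q p i .A) (d+1) := by
    intro i
    rw [partSum]
    have hb : ∀ P, (s ∩ fiber q p i P).ncard ≤ sz q p i P := fun P => by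
      rw [← ncard_fiber q p i P]
      exact Set.ncard_le_ncard Set.inter_subset_right (Set.toFinite _)
    exact localClass d _ _ _ _ _ _ _ _ (hb .C) (hb .D) (hb .X) (hb .A)
      (deg_C q p s d i hreg) (deg_D q p s d i hreg)
      (deg_X q p s d i hreg) (deg_A q p s d i hreg)
  choose k hk1 hk2 using hloc
  have hsum : ∑ i : Idx q p, ∑ P : MyPart, (s ∩ fiber q p i P).ncard = q*p := by
    calc ∑ i : Idx q p, ∑ P : MyPart, (s ∩ fiber q p i P).ncard
        = ∑ i : Idx q p, ∑ P : MyPart,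
            (s ∩ (fun v : Vtx q p => (v.1, v.2.1)) ⁻¹' {(i,P)}).ncard := by
          refine Finset.sum_congr rfl fun i _ => Finset.sum_congr rfl fun P _ => ?_
          congr 1
          ext w
          simp [fiber, Prod.ext_iff]
      _ = s.ncard := by
          rw [ncard_eq_sum_fibers s (fun v : Vtx q p => (v.1, v.2.1)), Fintype.sum_prod_type]
      _ = q*p := hcard
  have hKsum : q*p = (∑ i : Idx q p, k i) * (d+1) := by
    refine hsum.symm.trans ?_
    rw [Finset.sum_mul]
    exact Finset.sum_congr rfl fun i _ => hk1 i
  set K := ∑ i : Idx q p, k i with hK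
  have hKcap : K ≤ ∑ i : Idx q p,
      cap (sz q p i .C) (sz q p i .D) (sz q p i .X) (sz q p i .A) (d+1) :=
    Finset.sum_le_sum fun i _ => hk2 i
  have capeval : ∀ s'' : ℕ, ∑ i : Idx q p,
      cap (sz q p i .C) (sz q p i .D) (sz q p i .X) (sz q p i .A) s''
      = (∑ i : Fin (q-1), cap (q*p-p) (p-1) (if (i:ℕ)<t then p-1 else 0)
            (if (i:ℕ)<t then p-1 else 0) s'')
        + ((p-q-t) * cap 0 (p-1) 0 0 s'' + (q*p-p) * cap 0 (q-1) 0 0 s'') := by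
    intro s''
    rw [Fintype.sum_sum_type, Fintype.sum_sum_type]
    congr 1
    congr 1
    · trans ∑ _a : Fin (p - q - min (q-1) (p-q)), cap 0 (p-1) 0 0 s''
      · exact Finset.sum_congr rfl fun a _ => rfl
      · rw [Finset.sum_const, Finset.card_univ, Fintype.card_fin, smul_eq_mul]
    · trans ∑ _a : Fin (q*p - p), cap 0 (q-1) 0 0 s''
      · exact Finset.sum_congr rfl fun a _ => rfl
      · rw [Finset.sum_const, Finset.card_univ, Fintype.card_fin, smul_eq_mul]
  have hdvd : (d+1) ∣ q*p := Dvd.intro_left K hKsum.symm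
  have hs'pos : 0 < d + 1 := Nat.succ_pos d
  rcases dvd_mul_primes hq hp (by omega) hdvd with h1 | h1 | h1 | h1
  -- case s' = 1
  · have hKval : K = q*p := by rw [h1, mul_one] at hKsum; omega
    rw [capeval, h1] at hKcap
    have e1 : ∑ i : Fin (q-1), cap (q*p-p) (p-1) (if (i:ℕ)<t then p-1 else 0)
        (if (i:ℕ)<t then p-1 else 0) 1 = t*2 + ((q-1)-t)*1 := by
      rw [← sum_if_fin (q-1) t 2 1 ht1]
      refine Finset.sum_congr rfl fun i _ => ?_
      unfold cap; split_ifs <;> omega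
    have e2 : cap 0 (p-1) 0 0 1 = 1 := by unfold cap; split_ifs <;> omega
    have e3 : cap 0 (q-1) 0 0 1 = 1 := by unfold cap; split_ifs <;> omega
    rw [e1, e2, e3] at hKcap
    omega
  -- case s' = q
  · have hKval : K = p := by
      rw [h1] at hKsum
      have : q * p = q * K := by rw [hKsum]; ring
      exact (Nat.eq_of_mul_eq_mul_left (by omega) this).symm
    rw [capeval, h1] at hKcap
    have e1 : ∑ i : Fin (q-1), cap (q*p-p) (p-1) (if (i:ℕ)<t then p-1 else 0)
        (if (i:ℕ)<t then p-1 else 0) q = t*2 + ((q-1)-t)*1 := by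
      rw [← sum_if_fin (q-1) t 2 1 ht1]
      refine Finset.sum_congr rfl fun i _ => ?_
      unfold cap; split_ifs <;> omega
    have e2 : cap 0 (p-1) 0 0 q = 1 := by unfold cap; split_ifs <;> omega
    have e3 : cap 0 (q-1) 0 0 q = 0 := by unfold cap; split_ifs <;> omega
    rw [e1, e2, e3] at hKcap
    omega
  -- case s' = p
  · have hKval : K = q := by
      rw [h1] at hKsum
      have : p * q = p * K := by rw [mul_comm] at hKsum; rw [hKsum]; ring
      exact (Nat.eq_of_mul_eq_mul_left (by omega) this).symm
    rw [capeval, h1] at hKcap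
    have e1 : ∑ i : Fin (q-1), cap (q*p-p) (p-1) (if (i:ℕ)<t then p-1 else 0)
        (if (i:ℕ)<t then p-1 else 0) p = t*1 + ((q-1)-t)*1 := by
      rw [← sum_if_fin (q-1) t 1 1 ht1]
      refine Finset.sum_congr rfl fun i _ => ?_
      unfold cap; split_ifs <;> omega
    have e2 : cap 0 (p-1) 0 0 p = 0 := by unfold cap; split_ifs <;> omega
    have e3 : cap 0 (q-1) 0 0 p = 0 := by unfold cap; split_ifs <;> omega
    rw [e1, e2, e3] at hKcap
    omega
  -- case s' = q*p
  · have hKval : K = 1 := by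
      rw [h1] at hKsum
      have : K * (q*p) = 1 * (q*p) := by rw [← hKsum]; ring
      exact Nat.eq_of_mul_eq_mul_right (by omega) this
    rw [capeval, h1] at hKcap
    have e1 : ∑ i : Fin (q-1), cap (q*p-p) (p-1) (if (i:ℕ)<t then p-1 else 0)
        (if (i:ℕ)<t then p-1 else 0) (q*p) = t*0 + ((q-1)-t)*0 := by
      rw [← sum_if_fin (q-1) t 0 0 ht1]
      refine Finset.sum_congr rfl fun i _ => ?_
      unfold cap; split_ifs <;> omega
    have e2 : cap 0 (p-1) 0 0 (q*p) = 0 := by unfold cap; split_ifs <;> omega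
    have e3 : cap 0 (q-1) 0 0 (q*p) = 0 := by unfold cap; split_ifs <;> omega
    rw [e1, e2, e3] at hKcap
    omega

lemma card_Vtx (q p : ℕ) (hq2 : 2 ≤ q) (hp3 : 3 ≤ p) (hqp : q < p) :
    Fintype.card (Vtx q p)
      = p^2 + 2*q^2*p - 4*q*p + 1 + (p - 1) * min (q - 1) (p - q) := by
  have hM1 : 2*p ≤ q*p := Nat.mul_le_mul_right p hq2
  have ht1 : min (q-1) (p-q) ≤ q-1 := min_le_left _ _
  have ht2 : min (q-1) (p-q) ≤ p-q := min_le_right _ _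
  have h4 : 4*q*p ≤ p^2 + 2*q^2*p := by nlinarith
  rw [Fintype.card_sigma]
  rw [Fintype.sum_sum_type]
  have e0 : ∀ i : Idx q p, Fintype.card ((P : MyPart) × Fin (sz q p i P))
      = sz q p i .C + sz q p i .D + sz q p i .X + sz q p i .A := by
    intro i
    rw [Fintype.card_sigma, partSum]
    simp
  have e1 : ∑ i : Fin (q-1), Fintype.card ((P : MyPart) × Fin (sz q p (Sum.inl i) P))
      = (min (q-1) (p-q)) * ((q*p-p) + (p-1) + (p-1) + (p-1))
        + ((q-1) - min (q-1) (p-q)) * ((q*p-p) + (p-1)) := by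
    rw [← sum_if_fin (q-1) (min (q-1) (p-q)) _ _ ht1]
    refine Finset.sum_congr rfl fun i _ => ?_
    rw [e0]
    show (q*p-p) + (p-1) + (if (i:ℕ) < min (q-1) (p-q) then p-1 else 0)
        + (if (i:ℕ) < min (q-1) (p-q) then p-1 else 0) = _
    split_ifs <;> omega
  rw [e1, Fintype.sum_sum_type]
  have e2 : ∑ i : Fin (p - q - min (q-1) (p-q)),
      Fintype.card ((P : MyPart) × Fin (sz q p (Sum.inr (Sum.inl i)) P))
      = (p - q - min (q-1) (p-q)) * (p-1) := by
    trans ∑ _i : Fin (p - q - min (q-1) (p-q)), (p-1)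
    · refine Finset.sum_congr rfl fun i _ => ?_
      rw [e0]
      show 0 + (p-1) + 0 + 0 = _
      omega
    · rw [Finset.sum_const, Finset.card_univ, Fintype.card_fin, smul_eq_mul]
  have e3 : ∑ i : Fin (q*p - p),
      Fintype.card ((P : MyPart) × Fin (sz q p (Sum.inr (Sum.inr i)) P))
      = (q*p - p) * (q-1) := by
    trans ∑ _i : Fin (q*p - p), (q-1)
    · refine Finset.sum_congr rfl fun i _ => ?_
      rw [e0]
      show 0 + (q-1) + 0 + 0 = _
      omega
    · rw [Finset.sum_const, Finset.card_univ, Fintype.card_fin, smul_eq_mul]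
  rw [e2, e3]
  have hq1 : 1 ≤ q := by omega
  have hp1 : 1 ≤ p := by omega
  have hqp' : q ≤ p := by omega
  have hpqp : p ≤ q*p := by omega
  zify [hq1, hp1, hqp', ht1, ht2, hpqp, h4]
  ring

lemma ramseyAux : ∀ (N s t : ℕ), s + t ≤ N →
    ∃ n : ℕ, ∀ (V : Type) (G : SimpleGraph V) (W : Finset V), n ≤ W.card →
      (∃ A : Finset V, ↑A ⊆ (W : Set V) ∧ A.card = s ∧ G.IsClique ↑A) ∨
      (∃ B : Finset V, ↑B ⊆ (W : Set V) ∧ B.card = t ∧ Gᶜ.IsClique ↑B) := by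
  intro N
  induction N with
  | zero =>
    intro s t hst
    obtain ⟨rfl, rfl⟩ : s = 0 ∧ t = 0 := by omega
    exact ⟨0, fun V G W _ => Or.inl ⟨∅, by simp, rfl, by simp⟩⟩
  | succ N ih =>
    intro s t hst
    match s, t with
    | 0, t => exact ⟨0, fun V G W _ => Or.inl ⟨∅, by simp, rfl, by simp⟩⟩
    | s+1, 0 => exact ⟨0, fun V G W _ => Or.inr ⟨∅, by simp, rfl, by simp⟩⟩
    | s+1, t+1 =>
      obtain ⟨n1, h1⟩ := ih s (t+1) (by omega)
      obtain ⟨n2, h2⟩ := ih (s+1) t (by omega)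
      refine ⟨n1 + n2 + 1, fun V G W hW => ?_⟩
      classical
      have hWne : W.Nonempty := Finset.card_pos.mp (by omega)
      obtain ⟨v, hv⟩ := hWne
      set Nb := (W.erase v).filter (fun w => G.Adj v w) with hNb
      set Mb := (W.erase v).filter (fun w => ¬ G.Adj v w) with hMb
      have hcard : Nb.card + Mb.card = (W.erase v).card :=
        Finset.card_filter_add_card_filter_not _
      have hNbW : (Nb : Set V) ⊆ (W : Set V) := by
        intro x hx; simp only [hNb, Finset.coe_filter, Set.mem_setOf_eq] at hx
        exact Finset.mem_coe.mpr (Finset.mem_of_mem_erase hx.1)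
      have hMbW : (Mb : Set V) ⊆ (W : Set V) := by
        intro x hx; simp only [hMb, Finset.coe_filter, Set.mem_setOf_eq] at hx
        exact Finset.mem_coe.mpr (Finset.mem_of_mem_erase hx.1)
      have hle : n1 ≤ Nb.card ∨ n2 ≤ Mb.card := by
        rw [Finset.card_erase_of_mem hv] at hcard; omega
      rcases hle with hle | hle
      · rcases h1 V G Nb hle with ⟨A, hAs, hAc, hAcl⟩ | ⟨B, hBs, hBc, hBcl⟩
        · have hmemNb : ∀ x ∈ A, x ∈ Nb := fun x hx => hAs hx
          have hvA : v ∉ A := by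
            intro hvA
            have := hmemNb v hvA
            simp [hNb] at this
          refine Or.inl ⟨insert v A, ?_, ?_, ?_⟩
          · rw [Finset.coe_insert]
            intro x hx
            rcases Set.mem_insert_iff.mp hx with rfl | hx
            · exact hv
            · exact hNbW (hAs hx)
          · rw [Finset.card_insert_of_notMem hvA, hAc]
          · rw [Finset.coe_insert]
            refine hAcl.insert fun b hb _ => ?_
            have := hmemNb b hb
            simp only [hNb, Finset.mem_filter] at this
            exact this.2
        · exact Or.inr ⟨B, hBs.trans hNbW, hBc, hBcl⟩
      · rcases h2 V G Mb hle with ⟨A, hAs, hAc, hAcl⟩ | ⟨B, hBs, hBc, hBcl⟩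
        · exact Or.inl ⟨A, hAs.trans hMbW, hAc, hAcl⟩
        · have hmemMb : ∀ x ∈ B, x ∈ Mb := fun x hx => hBs hx
          have hvB : v ∉ B := by
            intro hvB
            have := hmemMb v hvB
            simp [hMb] at this
          refine Or.inr ⟨insert v B, ?_, ?_, ?_⟩
          · rw [Finset.coe_insert]
            intro x hx
            rcases Set.mem_insert_iff.mp hx with rfl | hx
            · exact hv
            · exact hMbW (hBs hx)
          · rw [Finset.card_insert_of_notMem hvB, hBc]
          · rw [Finset.coe_insert]
            refine hBcl.insert fun b hb _ => ?_
            have := hmemMb b hb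
            simp only [hMb, Finset.mem_filter, Finset.mem_erase] at this
            exact ⟨(this.1.1).symm, this.2⟩

lemma cliqueRegOn {V : Type*} (G : SimpleGraph V) (A : Finset V) (h : G.IsClique ↑A) :
    RegOn G ↑A := by
  refine ⟨A.card - 1, fun v hv => ?_⟩
  have he : ((A : Set V) ∩ {w | G.Adj v w}) = ↑A \ {v} := by
    ext w
    simp only [Set.mem_inter_iff, Set.mem_setOf_eq, Set.mem_diff, Set.mem_singleton_iff]
    constructor
    · rintro ⟨hw, hadj⟩
      exact ⟨hw, fun hwv => G.irrefl (hwv ▸ hadj)⟩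
    · rintro ⟨hw, hne⟩
      exact ⟨hw, h hv hw (Ne.symm hne)⟩
  rw [he, Set.ncard_diff_singleton_of_mem hv, Set.ncard_coe_finset]

lemma indepRegOn {V : Type*} (G : SimpleGraph V) (B : Finset V) (h : Gᶜ.IsClique ↑B) :
    RegOn G ↑B := by
  refine ⟨0, fun v hv => ?_⟩
  have he : ((B : Set V) ∩ {w | G.Adj v w}) = ∅ := by
    ext w
    simp only [Set.mem_inter_iff, Set.mem_setOf_eq, Set.mem_empty_iff_false, iff_false,
      not_and]
    intro hw hadj
    by_cases hvw : v = w
    · exact G.irrefl (hvw ▸ hadj)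
    · exact (h hv hw hvw).2 hadj
  rw [he, Set.ncard_empty]

lemma hasRegEq_comap {V W : Type*} (f : V → W) (hf : Function.Injective f)
    (G : SimpleGraph W) (k : ℕ) (h : HasRegEq (G.comap f) k) : HasRegEq G k := by
  obtain ⟨s, hcard, d, hd⟩ := h
  refine ⟨f '' s, by rwa [Set.ncard_image_of_injective _ hf], d, ?_⟩
  rintro w ⟨v, hv, rfl⟩
  have hpre : {u | (G.comap f).Adj v u} = f ⁻¹' {w | G.Adj (f v) w} := rfl
  have he : f '' s ∩ {w | G.Adj (f v) w} = f '' (s ∩ {u | (G.comap f).Adj v u}) := by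
    rw [hpre, Set.image_inter_preimage]
  rw [he, Set.ncard_image_of_injective _ hf]
  exact hd v hv

theorem Neq_lower_bound_qp (q p : ℕ) (hq : q.Prime) (hp : p.Prime) (hqp : q < p) :
    (∃ G : SimpleGraph
        (Fin (p^2 + 2*q^2*p - 4*q*p + 1 + (p - 1) * min (q - 1) (p - q))),
      ¬ HasRegEq G (q * p)) ∧
    p^2 + 2*q^2*p - 4*q*p + 2 + (p - 1) * min (q - 1) (p - q) ≤ Neq (q * p) := by
  have hq2 : 2 ≤ q := hq.two_le
  have hp3 : 3 ≤ p := by have := hp.two_le; omega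
  have h4 : 4*q*p ≤ p^2 + 2*q^2*p := by
    have h : 2*2 ≤ 2*q := by omega
    have h' := Nat.mul_le_mul_right (q*p) h
    have : 4*q*p ≤ 2*q^2*p := by
      calc 4*q*p = 2*2*(q*p) := by ring
        _ ≤ 2*q*(q*p) := h'
        _ = 2*q^2*p := by ring
    omega
  set N := p^2 + 2*q^2*p - 4*q*p + 1 + (p - 1) * min (q - 1) (p - q) with hN
  have hcardV : Fintype.card (Vtx q p) = N := card_Vtx q p hq2 hp3 hqp
  have e : Fin N ≃ Vtx q p :=
    Fintype.equivOfCardEq (by rw [Fintype.card_fin, hcardV])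
  have hG : ¬ HasRegEq ((Gr q p).comap e) (q*p) := fun h =>
    noRegGr q p hq hp hqp (hasRegEq_comap e e.injective _ _ h)
  constructor
  · exact ⟨(Gr q p).comap e, hG⟩
  · have hSne : ∃ n, n ∈ {n | ∀ G : SimpleGraph (Fin n), HasRegEq G (q*p)} := by
      obtain ⟨n, hn⟩ := ramseyAux (q*p + q*p) (q*p) (q*p) le_rfl
      refine ⟨n, fun G => ?_⟩
      rcases hn (Fin n) G Finset.univ (by simp) with ⟨A, _, hAc, hAcl⟩ | ⟨B, _, hBc, hBcl⟩
      · exact ⟨↑A, by rw [Set.ncard_coe_finset, hAc], cliqueRegOn G A hAcl⟩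
      · exact ⟨↑B, by rw [Set.ncard_coe_finset, hBc], indepRegOn G B hBcl⟩
    rw [Neq]
    refine le_csInf hSne ?_
    intro m hm
    by_contra hlt
    push_neg at hlt
    have key : p^2 + 2*q^2*p - 4*q*p + 2 + (p - 1) * min (q - 1) (p - q) = N + 1 := by
      rw [hN]
      have hp1 : 1 ≤ p := by omega
      zify [h4, hp1]
      ring
    rw [key] at hlt
    have hmN : m ≤ N := by omega
    have hinj : Function.Injective (fun x : Fin m => e (Fin.castLE hmN x)) :=
      e.injective.comp (Fin.castLE_injective hmN)
    exact hG (hasRegEq_comap (Fin.castLE hmN) (Fin.castLE_injective hmN)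
      ((Gr q p).comap e) (q*p) (hm (((Gr q p).comap e).comap (Fin.castLE hmN))))
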